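/- arXiv:2202.04628 — 2 statements merged into one kernel-verified Lean document; each statement's English description precedes it below -/
import Mathlib

section
/- (Surrogate upper bound for the policy guidance objective) Let π_b be a behavior policy of the fixed finite discounted MDP with π_b(s,a) > 0 for all (s,a), let π' be a policy with π'(s,a) > 0 for all (s,a), and let δ_k > 0. Then for every policy π with π(s,a) > 0 for all (s,a) and D^max_KL(π, π') ≤ δ_k, it holds that D^π_KL(π, π_b) ≤ α_k + ∑_s d^{π'}(s) ∑_a π(s,a) A^{π'}_{C_{π'}}(s,a) + (γ/(1−γ)) ε √(2 δ_k) + δ_k, where α_k = D^{π'}_KL(π', π_b) and ε = max_{s,a} |A^{π'}_{C_{π'}}(s,a)|. -/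
open Finset

/-- Time-`t` state distribution of policy `π` in the MDP with transitions `P`
and initial distribution `μ`. -/
noncomputable def pDist {S A : Type*} [Fintype S] [Fintype A]
    (P : S → A → S → ℝ) (μ : S → ℝ) (π : S → A → ℝ) : ℕ → S → ℝ
  | 0 => μ
  | t + 1 => fun s' => ∑ s, ∑ a, pDist P μ π t s * π s a * P s a s'

/-- Discounted state visitation distribution `d^π`. -/
noncomputable def dvisit {S A : Type*} [Fintype S] [Fintype A]
    (P : S → A → S → ℝ) (μ : S → ℝ) (γ : ℝ) (π : S → A → ℝ) (s : S) : ℝ :=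
  (1 - γ) * ∑' t : ℕ, γ ^ t * pDist P μ π t s

/-- Discounted return `J_R(π)`. -/
noncomputable def Jret {S A : Type*} [Fintype S] [Fintype A]
    (P : S → A → S → ℝ) (μ : S → ℝ) (γ : ℝ) (R : S → A → ℝ) (π : S → A → ℝ) : ℝ :=
  ∑' t : ℕ, γ ^ t * ∑ s, ∑ a, pDist P μ π t s * π s a * R s a

/-- Advantage function `A_R^π(s,a) = Q_R^π(s,a) - V_R^π(s)`, expressed in terms of
the value function `V` of the policy. -/
noncomputable def Adv {S A : Type*} [Fintype S]
    (P : S → A → S → ℝ) (γ : ℝ) (R : S → A → ℝ) (V : S → ℝ) (s : S) (a : A) : ℝ :=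
  (R s a + γ * ∑ s', P s a s' * V s') - V s

/-- KL divergence between two distributions on a finite type. -/
noncomputable def KL {X : Type*} [Fintype X] (p q : X → ℝ) : ℝ :=
  ∑ x, p x * Real.log (p x / q x)

/-- Total variation distance between two distributions on a finite type. -/
noncomputable def TV {X : Type*} [Fintype X] (p q : X → ℝ) : ℝ :=
  (1 / 2) * ∑ x, |p x - q x|


/-- Padé lower bound for log on `[1, ∞)`. -/
lemma log_ge_pade {t : ℝ} (ht : 1 ≤ t) : 3 * (t ^ 2 - 1) / (t ^ 2 + 4 * t + 1) ≤ Real.log t := by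
  set g : ℝ → ℝ := fun x => Real.log x - 3 * (x ^ 2 - 1) / (x ^ 2 + 4 * x + 1) with hg
  have hd : ∀ x : ℝ, 0 < x →
      HasDerivAt g ((x - 1) ^ 4 / (x * (x ^ 2 + 4 * x + 1) ^ 2)) x := by
    intro x hx
    have hden : x ^ 2 + 4 * x + 1 ≠ 0 := by positivity
    have h1 : HasDerivAt (fun y : ℝ => 3 * (y ^ 2 - 1)) (3 * (2 * x)) x := by
      have := ((hasDerivAt_pow 2 x).sub_const 1).const_mul (3 : ℝ)
      exact this.congr_deriv (by push_cast; ring)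
    have h2 : HasDerivAt (fun y : ℝ => y ^ 2 + 4 * y + 1) (2 * x + 4) x := by
      have := (((hasDerivAt_pow 2 x).add ((hasDerivAt_id x).const_mul (4:ℝ))).add_const 1)
      exact this.congr_deriv (by push_cast; ring)
    have h3 := h1.div h2 hden
    have h4 := (Real.hasDerivAt_log hx.ne').sub h3
    refine h4.congr_deriv ?_
    field_simp
    ring
  have mono : MonotoneOn g (Set.Ici 1) := by
    apply monotoneOn_of_deriv_nonneg (convex_Ici 1)
    · exact fun x hx => ((hd x (lt_of_lt_of_le one_pos hx)).continuousAt).continuousWithinAt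
    · intro x hx
      rw [interior_Ici] at hx
      exact ((hd x (lt_trans one_pos hx)).differentiableAt).differentiableWithinAt
    · intro x hx
      rw [interior_Ici] at hx
      have hx0 : (0:ℝ) < x := lt_trans one_pos hx
      rw [(hd x hx0).deriv]
      have hpos : (0:ℝ) < x * (x ^ 2 + 4 * x + 1) ^ 2 := by positivity
      exact div_nonneg (by positivity) hpos.le
  have h1 : g 1 ≤ g t := mono Set.self_mem_Ici ht ht
  have hg1 : g 1 = 0 := by simp [hg]
  rw [hg1] at h1
  simp only [hg] at h1
  linarith

/-- Padé upper bound for log on `[1, ∞)`. -/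
lemma log_le_pade {t : ℝ} (ht : 1 ≤ t) : Real.log t ≤ (t - 1) * (t + 5) / (4 * t + 2) := by
  set g : ℝ → ℝ := fun x => (x - 1) * (x + 5) / (4 * x + 2) - Real.log x with hg
  have hd : ∀ x : ℝ, 0 < x →
      HasDerivAt g (4 * (x - 1) ^ 3 / (x * (4 * x + 2) ^ 2)) x := by
    intro x hx
    have hden : 4 * x + 2 ≠ 0 := by positivity
    have h1 : HasDerivAt (fun y : ℝ => (y - 1) * (y + 5)) ((x + 5) + (x - 1)) x := by
      have := ((hasDerivAt_id x).sub_const 1).mul ((hasDerivAt_id x).add_const 5)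
      exact this.congr_deriv (by simp only [id]; ring)
    have h2 : HasDerivAt (fun y : ℝ => 4 * y + 2) (4 : ℝ) x := by
      have := ((hasDerivAt_id x).const_mul (4:ℝ)).add_const 2
      exact this.congr_deriv (by ring)
    have h3 := (h1.div h2 hden).sub (Real.hasDerivAt_log hx.ne')
    refine h3.congr_deriv ?_
    field_simp
    ring
  have mono : MonotoneOn g (Set.Ici 1) := by
    apply monotoneOn_of_deriv_nonneg (convex_Ici 1)
    · exact fun x hx => ((hd x (lt_of_lt_of_le one_pos hx)).continuousAt).continuousWithinAt
    · intro x hx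
      rw [interior_Ici] at hx
      exact ((hd x (lt_trans one_pos hx)).differentiableAt).differentiableWithinAt
    · intro x hx
      rw [interior_Ici] at hx
      have hx0 : (0:ℝ) < x := lt_trans one_pos hx
      rw [(hd x hx0).deriv]
      have hx1 : (1:ℝ) ≤ x := le_of_lt hx
      have hpos : (0:ℝ) < x * (4 * x + 2) ^ 2 := by positivity
      have hnum : (0:ℝ) ≤ 4 * (x - 1) ^ 3 := by
        have := pow_nonneg (by linarith : (0:ℝ) ≤ x - 1) 3; linarith
      exact div_nonneg hnum hpos.le
  have h1 : g 1 ≤ g t := mono Set.self_mem_Ici ht ht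
  have hg1 : g 1 = 0 := by simp [hg]
  rw [hg1] at h1
  simp only [hg] at h1
  linarith

/-- Pointwise refined Pinsker inequality, normalized form. -/
lemma pointwise_t {t : ℝ} (ht : 0 < t) :
    3 * (t - 1) ^ 2 / (2 * (t + 2)) ≤ t * Real.log t - t + 1 := by
  rcases le_or_gt 1 t with h | h
  · have hl := log_ge_pade h
    have hden : (0:ℝ) < t ^ 2 + 4 * t + 1 := by positivity
    have step1 : 3 * (t - 1) ^ 2 / (2 * (t + 2)) ≤ (t - 1) ^ 2 * (2 * t + 1) / (t ^ 2 + 4 * t + 1) := by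
      rw [div_le_div_iff₀ (by positivity) hden]
      nlinarith [sq_nonneg (t - 1), sq_nonneg ((t - 1) ^ 2)]
    have step2 : (t - 1) ^ 2 * (2 * t + 1) / (t ^ 2 + 4 * t + 1)
        = t * (3 * (t ^ 2 - 1) / (t ^ 2 + 4 * t + 1)) - t + 1 := by
      field_simp
      ring
    have step3 : t * (3 * (t ^ 2 - 1) / (t ^ 2 + 4 * t + 1)) ≤ t * Real.log t :=
      mul_le_mul_of_nonneg_left hl (by linarith)
    linarith [step1.trans_eq step2]
  · have hu : 1 ≤ 1 / t := by
      rw [le_div_iff₀ ht]; linarith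
    have hl := log_le_pade hu
    have hlog : Real.log (1 / t) = - Real.log t := by
      rw [one_div, Real.log_inv]
    rw [hlog] at hl
    have hlt : (t - 1) * (5 * t + 1) / (2 * t * (t + 2)) ≤ Real.log t := by
      have ht' : t ≠ 0 := ht.ne'
      have ht2 : t + 2 ≠ 0 := by positivity
      have he : -((1 / t - 1) * (1 / t + 5) / (4 * (1 / t) + 2))
          = (t - 1) * (5 * t + 1) / (2 * t * (t + 2)) := by
        field_simp
        ring
      linarith [he ▸ (neg_le_neg hl)]
    have step3 : t * ((t - 1) * (5 * t + 1) / (2 * t * (t + 2))) ≤ t * Real.log t :=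
      mul_le_mul_of_nonneg_left hlt ht.le
    have he2 : t * ((t - 1) * (5 * t + 1) / (2 * t * (t + 2))) - t + 1
        = 3 * (t - 1) ^ 2 / (2 * (t + 2)) := by
      field_simp
      ring
    linarith

/-- Pointwise refined Pinsker inequality. -/
lemma pointwise_kl {a b : ℝ} (ha : 0 < a) (hb : 0 < b) :
    3 * (a - b) ^ 2 / (2 * (a + 2 * b)) ≤ a * Real.log (a / b) - a + b := by
  have ht : 0 < a / b := div_pos ha hb
  have h := pointwise_t ht
  have hb' : b ≠ 0 := hb.ne'
  have hab : a + 2 * b ≠ 0 := by positivity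
  have e1 : 3 * (a - b) ^ 2 / (2 * (a + 2 * b)) = b * (3 * (a / b - 1) ^ 2 / (2 * (a / b + 2))) := by
    rw [div_add' _ _ _ hb', div_sub' hb']
    field_simp
  have e2 : b * (a / b * Real.log (a / b) - a / b + 1) = a * Real.log (a / b) - a + b := by
    field_simp
  rw [e1, ← e2]
  exact mul_le_mul_of_nonneg_left h hb.le

/-- Pinsker's inequality for positive distributions on a finite type. -/
lemma pinsker_fin {X : Type*} [Fintype X] (p q : X → ℝ)
    (hp : ∀ x, 0 < p x) (hq : ∀ x, 0 < q x)
    (hp1 : ∑ x, p x = 1) (hq1 : ∑ x, q x = 1) :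
    TV p q ≤ Real.sqrt (KL p q / 2) := by
  set w : X → ℝ := fun x => 2 * (p x + 2 * q x) / 3 with hw
  have hw0 : ∀ x, 0 < w x := fun x => by
    have := hp x; have := hq x; simp only [hw]; positivity
  have hsumw : ∑ x, w x = 2 := by
    have : ∀ x ∈ Finset.univ (α := X), w x = 2 / 3 * p x + 4 / 3 * q x := fun x _ => by
      simp only [hw]; ring
    rw [Finset.sum_congr rfl this, Finset.sum_add_distrib, ← Finset.mul_sum, ← Finset.mul_sum,
      hp1, hq1]
    norm_num
  have key : ∀ x, (p x - q x) ^ 2 / w x ≤ p x * Real.log (p x / q x) - p x + q x := by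
    intro x
    have h := pointwise_kl (hp x) (hq x)
    have he : (p x - q x) ^ 2 / w x = 3 * (p x - q x) ^ 2 / (2 * (p x + 2 * q x)) := by
      simp only [hw]
      rw [div_div_eq_mul_div]
      rw [div_eq_div_iff (by have := hp x; have := hq x; positivity)
        (by have := hp x; have := hq x; positivity)]
      ring
    rw [he]; exact h
  have cs := Finset.sum_mul_sq_le_sq_mul_sq Finset.univ
    (fun x => |p x - q x| / Real.sqrt (w x)) (fun x => Real.sqrt (w x))
  have e1 : ∀ x ∈ Finset.univ (α := X),
      |p x - q x| / Real.sqrt (w x) * Real.sqrt (w x) = |p x - q x| := fun x _ => by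
    rw [div_mul_cancel₀]
    exact (Real.sqrt_pos.mpr (hw0 x)).ne'
  have e2 : ∀ x ∈ Finset.univ (α := X),
      (|p x - q x| / Real.sqrt (w x)) ^ 2 = (p x - q x) ^ 2 / w x := fun x _ => by
    rw [div_pow, sq_abs, Real.sq_sqrt (hw0 x).le]
  have e3 : ∀ x ∈ Finset.univ (α := X), Real.sqrt (w x) ^ 2 = w x := fun x _ => by
    rw [Real.sq_sqrt (hw0 x).le]
  rw [Finset.sum_congr rfl e1, Finset.sum_congr rfl e2, Finset.sum_congr rfl e3, hsumw] at cs
  have hKLsum : ∑ x, ((p x - q x) ^ 2 / w x) ≤ KL p q := by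
    have : ∑ x, (p x * Real.log (p x / q x) - p x + q x) = KL p q := by
      simp only [KL, Finset.sum_add_distrib, Finset.sum_sub_distrib, hp1, hq1]
      ring
    rw [← this]
    exact Finset.sum_le_sum fun x _ => key x
  have habs : (0:ℝ) ≤ ∑ x, |p x - q x| := Finset.sum_nonneg fun x _ => abs_nonneg _
  have hsq : ((∑ x, |p x - q x|)) ^ 2 ≤ KL p q * 2 := by
    calc (∑ x, |p x - q x|) ^ 2 ≤ (∑ x, ((p x - q x) ^ 2 / w x)) * 2 := cs
      _ ≤ KL p q * 2 := by linarith
  have hTV : TV p q = (1/2) * ∑ x, |p x - q x| := rfl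
  have hTV0 : 0 ≤ TV p q := by rw [hTV]; positivity
  rw [← Real.sqrt_sq hTV0]
  apply Real.sqrt_le_sqrt
  rw [hTV]
  nlinarith [hsq]

section MDP
variable {S A : Type*} [Fintype S] [Fintype A]
variable (P : S → A → S → ℝ) (μ : S → ℝ) (ρ : S → A → ℝ)

lemma pDist_nonneg (hP0 : ∀ s a s', 0 ≤ P s a s') (hμ0 : ∀ s, 0 ≤ μ s)
    (hρ0 : ∀ s a, 0 ≤ ρ s a) : ∀ t s, 0 ≤ pDist P μ ρ t s := by
  intro t
  induction t with
  | zero => exact hμ0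
  | succ t ih =>
    intro s'
    exact Finset.sum_nonneg fun s _ => Finset.sum_nonneg fun a _ =>
      mul_nonneg (mul_nonneg (ih s) (hρ0 s a)) (hP0 s a s')

lemma pDist_sum_one (hP1 : ∀ s a, ∑ s', P s a s' = 1) (hμ1 : ∑ s, μ s = 1)
    (hρ1 : ∀ s, ∑ a, ρ s a = 1) : ∀ t, ∑ s, pDist P μ ρ t s = 1 := by
  intro t
  induction t with
  | zero => exact hμ1
  | succ t ih =>
    show ∑ s', ∑ s, ∑ a, pDist P μ ρ t s * ρ s a * P s a s' = 1
    rw [Finset.sum_comm]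
    calc ∑ s, ∑ s', ∑ a, pDist P μ ρ t s * ρ s a * P s a s'
        = ∑ s, ∑ a, ∑ s', pDist P μ ρ t s * ρ s a * P s a s' := by
          exact Finset.sum_congr rfl fun s _ => Finset.sum_comm
      _ = ∑ s, ∑ a, pDist P μ ρ t s * ρ s a := by
          refine Finset.sum_congr rfl fun s _ => Finset.sum_congr rfl fun a _ => ?_
          rw [← Finset.mul_sum, hP1, mul_one]
      _ = ∑ s, pDist P μ ρ t s := by
          refine Finset.sum_congr rfl fun s _ => ?_
          rw [← Finset.mul_sum, hρ1, mul_one]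
      _ = 1 := ih

lemma pDist_le_one (hP0 : ∀ s a s', 0 ≤ P s a s') (hP1 : ∀ s a, ∑ s', P s a s' = 1)
    (hμ0 : ∀ s, 0 ≤ μ s) (hμ1 : ∑ s, μ s = 1)
    (hρ0 : ∀ s a, 0 ≤ ρ s a) (hρ1 : ∀ s, ∑ a, ρ s a = 1) (t : ℕ) (s : S) :
    pDist P μ ρ t s ≤ 1 := by
  have h := pDist_sum_one P μ ρ hP1 hμ1 hρ1 t
  have := Finset.single_le_sum (f := fun s => pDist P μ ρ t s)
    (fun s _ => pDist_nonneg P μ ρ hP0 hμ0 hρ0 t s) (Finset.mem_univ s)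
  linarith

lemma summable_pd {γ : ℝ} (hγ0 : 0 < γ) (hγ1 : γ < 1)
    (hP0 : ∀ s a s', 0 ≤ P s a s') (hP1 : ∀ s a, ∑ s', P s a s' = 1)
    (hμ0 : ∀ s, 0 ≤ μ s) (hμ1 : ∑ s, μ s = 1)
    (hρ0 : ∀ s a, 0 ≤ ρ s a) (hρ1 : ∀ s, ∑ a, ρ s a = 1) (s : S) :
    Summable (fun t : ℕ => γ ^ t * pDist P μ ρ t s) := by
  apply Summable.of_nonneg_of_le
    (fun t => mul_nonneg (pow_nonneg hγ0.le t) (pDist_nonneg P μ ρ hP0 hμ0 hρ0 t s))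
    (fun t => ?_) (summable_geometric_of_lt_one hγ0.le hγ1)
  calc γ ^ t * pDist P μ ρ t s ≤ γ ^ t * 1 :=
        mul_le_mul_of_nonneg_left (pDist_le_one P μ ρ hP0 hP1 hμ0 hμ1 hρ0 hρ1 t s)
          (pow_nonneg hγ0.le t)
    _ = γ ^ t := mul_one _

lemma dvisit_nonneg {γ : ℝ} (hγ1 : γ < 1)
    (hP0 : ∀ s a s', 0 ≤ P s a s') (hμ0 : ∀ s, 0 ≤ μ s)
    (hρ0 : ∀ s a, 0 ≤ ρ s a) (hγ0 : 0 < γ) (s : S) : 0 ≤ dvisit P μ γ ρ s := by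
  unfold dvisit
  apply mul_nonneg (by linarith)
  apply tsum_nonneg
  exact fun t => mul_nonneg (pow_nonneg hγ0.le t) (pDist_nonneg P μ ρ hP0 hμ0 hρ0 t s)

lemma sum_dvisit_one {γ : ℝ} (hγ0 : 0 < γ) (hγ1 : γ < 1)
    (hP0 : ∀ s a s', 0 ≤ P s a s') (hP1 : ∀ s a, ∑ s', P s a s' = 1)
    (hμ0 : ∀ s, 0 ≤ μ s) (hμ1 : ∑ s, μ s = 1)
    (hρ0 : ∀ s a, 0 ≤ ρ s a) (hρ1 : ∀ s, ∑ a, ρ s a = 1) :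
    ∑ s, dvisit P μ γ ρ s = 1 := by
  unfold dvisit
  rw [← Finset.mul_sum]
  rw [← Summable.tsum_finsetSum (fun s _ => summable_pd P μ ρ hγ0 hγ1 hP0 hP1 hμ0 hμ1 hρ0 hρ1 s)]
  have : ∀ t : ℕ, ∑ s, γ ^ t * pDist P μ ρ t s = γ ^ t := by
    intro t
    rw [← Finset.mul_sum, pDist_sum_one P μ ρ hP1 hμ1 hρ1 t, mul_one]
  rw [tsum_congr this, tsum_geometric_of_lt_one hγ0.le hγ1]
  rw [mul_inv_cancel₀ (by linarith : (1:ℝ) - γ ≠ 0)]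

lemma dvisit_flow {γ : ℝ} (hγ0 : 0 < γ) (hγ1 : γ < 1)
    (hP0 : ∀ s a s', 0 ≤ P s a s') (hP1 : ∀ s a, ∑ s', P s a s' = 1)
    (hμ0 : ∀ s, 0 ≤ μ s) (hμ1 : ∑ s, μ s = 1)
    (hρ0 : ∀ s a, 0 ≤ ρ s a) (hρ1 : ∀ s, ∑ a, ρ s a = 1) (s' : S) :
    dvisit P μ γ ρ s' = (1 - γ) * μ s'
      + γ * ∑ s, ∑ a, dvisit P μ γ ρ s * ρ s a * P s a s' := by
  have hsum : ∀ s, Summable (fun t : ℕ => γ ^ t * pDist P μ ρ t s) :=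
    fun s => summable_pd P μ ρ hγ0 hγ1 hP0 hP1 hμ0 hμ1 hρ0 hρ1 s
  have step0 : (∑' t : ℕ, γ ^ t * pDist P μ ρ t s')
      = μ s' + ∑' t : ℕ, γ ^ (t + 1) * pDist P μ ρ (t + 1) s' := by
    rw [Summable.tsum_eq_zero_add (hsum s')]
    simp only [pow_zero, one_mul]
    rfl
  have step1 : ∀ t : ℕ, γ ^ (t + 1) * pDist P μ ρ (t + 1) s'
      = ∑ s, ∑ a, (γ ^ t * pDist P μ ρ t s) * (γ * (ρ s a * P s a s')) := by
    intro t
    show γ ^ (t + 1) * (∑ s, ∑ a, pDist P μ ρ t s * ρ s a * P s a s') = _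
    rw [Finset.mul_sum]
    refine Finset.sum_congr rfl fun s _ => ?_
    rw [Finset.mul_sum]
    refine Finset.sum_congr rfl fun a _ => ?_
    ring
  have hsum2 : ∀ s ∈ Finset.univ (α := S), Summable
      (fun t : ℕ => ∑ a, (γ ^ t * pDist P μ ρ t s) * (γ * (ρ s a * P s a s'))) := by
    intro s _
    apply summable_sum
    intro a _
    exact (hsum s).mul_right _
  have step2 : (∑' t : ℕ, γ ^ (t + 1) * pDist P μ ρ (t + 1) s')
      = ∑ s, ∑ a, (∑' t : ℕ, γ ^ t * pDist P μ ρ t s) * (γ * (ρ s a * P s a s')) := by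
    rw [tsum_congr step1, Summable.tsum_finsetSum hsum2]
    refine Finset.sum_congr rfl fun s _ => ?_
    rw [Summable.tsum_finsetSum (fun a _ => (hsum s).mul_right _)]
    refine Finset.sum_congr rfl fun a _ => ?_
    exact tsum_mul_right
  unfold dvisit
  rw [step0, step2, mul_add]
  congr 1
  rw [Finset.mul_sum, Finset.mul_sum]
  refine Finset.sum_congr rfl fun s _ => ?_
  rw [Finset.mul_sum, Finset.mul_sum]
  refine Finset.sum_congr rfl fun a _ => ?_
  ring
lemma dvisit_telescope {γ : ℝ} (hγ0 : 0 < γ) (hγ1 : γ < 1)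
    (hP0 : ∀ s a s', 0 ≤ P s a s') (hP1 : ∀ s a, ∑ s', P s a s' = 1)
    (hμ0 : ∀ s, 0 ≤ μ s) (hμ1 : ∑ s, μ s = 1)
    (hρ0 : ∀ s a, 0 ≤ ρ s a) (hρ1 : ∀ s, ∑ a, ρ s a = 1) (V : S → ℝ) :
    ∑ s, dvisit P μ γ ρ s * V s
      = (1 - γ) * ∑ s, μ s * V s
        + γ * ∑ s, dvisit P μ γ ρ s * ∑ a, ρ s a * ∑ s', P s a s' * V s' := by
  have flow := dvisit_flow P μ ρ hγ0 hγ1 hP0 hP1 hμ0 hμ1 hρ0 hρ1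
  calc ∑ s', dvisit P μ γ ρ s' * V s'
      = ∑ s', ((1 - γ) * μ s' + γ * ∑ s, ∑ a, dvisit P μ γ ρ s * ρ s a * P s a s') * V s' := by
        exact Finset.sum_congr rfl fun s' _ => by rw [← flow s']
    _ = (1 - γ) * ∑ s', μ s' * V s'
        + γ * ∑ s', (∑ s, ∑ a, dvisit P μ γ ρ s * ρ s a * P s a s') * V s' := by
        rw [Finset.mul_sum, Finset.mul_sum, ← Finset.sum_add_distrib]
        exact Finset.sum_congr rfl fun s' _ => by ring
    _ = (1 - γ) * ∑ s, μ s * V s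
        + γ * ∑ s, dvisit P μ γ ρ s * ∑ a, ρ s a * ∑ s', P s a s' * V s' := by
        congr 1
        congr 1
        calc ∑ s', (∑ s, ∑ a, dvisit P μ γ ρ s * ρ s a * P s a s') * V s'
            = ∑ s', ∑ s, ∑ a, dvisit P μ γ ρ s * ρ s a * P s a s' * V s' := by
              refine Finset.sum_congr rfl fun s' _ => ?_
              rw [Finset.sum_mul]
              refine Finset.sum_congr rfl fun s _ => ?_
              rw [Finset.sum_mul]
          _ = ∑ s, ∑ s', ∑ a, dvisit P μ γ ρ s * ρ s a * P s a s' * V s' := Finset.sum_comm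
          _ = ∑ s, ∑ a, ∑ s', dvisit P μ γ ρ s * ρ s a * P s a s' * V s' :=
              Finset.sum_congr rfl fun s _ => Finset.sum_comm
          _ = ∑ s, dvisit P μ γ ρ s * ∑ a, ρ s a * ∑ s', P s a s' * V s' := by
              refine Finset.sum_congr rfl fun s _ => ?_
              rw [Finset.mul_sum]
              refine Finset.sum_congr rfl fun a _ => ?_
              rw [Finset.mul_sum, Finset.mul_sum]
              refine Finset.sum_congr rfl fun s' _ => ?_
              ring

/-- Return identity: average one-step reward against `d^ρ` in terms of an arbitrary
"value" function `V` and its advantage. -/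
lemma ret_identity {γ : ℝ} (hγ0 : 0 < γ) (hγ1 : γ < 1)
    (hP0 : ∀ s a s', 0 ≤ P s a s') (hP1 : ∀ s a, ∑ s', P s a s' = 1)
    (hμ0 : ∀ s, 0 ≤ μ s) (hμ1 : ∑ s, μ s = 1)
    (hρ0 : ∀ s a, 0 ≤ ρ s a) (hρ1 : ∀ s, ∑ a, ρ s a = 1) (C : S → A → ℝ) (V : S → ℝ) :
    ∑ s, dvisit P μ γ ρ s * ∑ a, ρ s a * C s a
      = ∑ s, dvisit P μ γ ρ s *
          ∑ a, ρ s a * ((C s a + γ * ∑ s', P s a s' * V s') - V s)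
        + (1 - γ) * ∑ s, μ s * V s := by
  have expand : ∀ s, ∑ a, ρ s a * ((C s a + γ * ∑ s', P s a s' * V s') - V s)
      = (∑ a, ρ s a * C s a) + γ * (∑ a, ρ s a * ∑ s', P s a s' * V s') - V s := by
    intro s
    have : ∀ a ∈ Finset.univ (α := A), ρ s a * ((C s a + γ * ∑ s', P s a s' * V s') - V s)
        = ρ s a * C s a + γ * (ρ s a * ∑ s', P s a s' * V s') - ρ s a * V s := fun a _ => by ring
    rw [Finset.sum_congr rfl this, Finset.sum_sub_distrib, Finset.sum_add_distrib,
      ← Finset.mul_sum, ← Finset.sum_mul, hρ1, one_mul]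
  have tel := dvisit_telescope P μ ρ hγ0 hγ1 hP0 hP1 hμ0 hμ1 hρ0 hρ1 V
  have lhs2 : ∑ s, dvisit P μ γ ρ s *
        ∑ a, ρ s a * ((C s a + γ * ∑ s', P s a s' * V s') - V s)
      = ∑ s, dvisit P μ γ ρ s * ∑ a, ρ s a * C s a
        + γ * ∑ s, dvisit P μ γ ρ s * (∑ a, ρ s a * ∑ s', P s a s' * V s')
        - ∑ s, dvisit P μ γ ρ s * V s := by
    rw [Finset.mul_sum, ← Finset.sum_add_distrib, ← Finset.sum_sub_distrib]
    refine Finset.sum_congr rfl fun s _ => ?_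
    rw [expand s]
    ring
  rw [lhs2]
  linarith
lemma pDist_l1 (π π' : S → A → ℝ)
    (hP0 : ∀ s a s', 0 ≤ P s a s') (hP1 : ∀ s a, ∑ s', P s a s' = 1)
    (hμ0 : ∀ s, 0 ≤ μ s) (hμ1 : ∑ s, μ s = 1)
    (hπ0 : ∀ s a, 0 ≤ π s a) (hπ1 : ∀ s, ∑ a, π s a = 1)
    (hπ'0 : ∀ s a, 0 ≤ π' s a) (hπ'1 : ∀ s, ∑ a, π' s a = 1)
    (c : ℝ) (hc : 0 ≤ c) (hTV : ∀ s, ∑ a, |π s a - π' s a| ≤ 2 * c) :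
    ∀ t : ℕ, ∑ s, |pDist P μ π t s - pDist P μ π' t s| ≤ 2 * t * c := by
  intro t
  induction t with
  | zero => simp [pDist]
  | succ t ih =>
    have step1 : ∀ s', |pDist P μ π (t+1) s' - pDist P μ π' (t+1) s'|
        ≤ ∑ s, ∑ a, |pDist P μ π t s * π s a - pDist P μ π' t s * π' s a| * P s a s' := by
      intro s'
      show |(∑ s, ∑ a, pDist P μ π t s * π s a * P s a s')
          - (∑ s, ∑ a, pDist P μ π' t s * π' s a * P s a s')| ≤ _
      rw [← Finset.sum_sub_distrib]
      refine (Finset.abs_sum_le_sum_abs _ _).trans (Finset.sum_le_sum fun s _ => ?_)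
      rw [← Finset.sum_sub_distrib]
      refine (Finset.abs_sum_le_sum_abs _ _).trans (Finset.sum_le_sum fun a _ => ?_)
      rw [← sub_mul, abs_mul, abs_of_nonneg (hP0 s a s')]
    calc ∑ s', |pDist P μ π (t+1) s' - pDist P μ π' (t+1) s'|
        ≤ ∑ s', ∑ s, ∑ a, |pDist P μ π t s * π s a - pDist P μ π' t s * π' s a| * P s a s' :=
          Finset.sum_le_sum fun s' _ => step1 s'
      _ = ∑ s, ∑ a, |pDist P μ π t s * π s a - pDist P μ π' t s * π' s a| := by
          rw [Finset.sum_comm]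
          refine Finset.sum_congr rfl fun s _ => ?_
          rw [Finset.sum_comm]
          refine Finset.sum_congr rfl fun a _ => ?_
          rw [← Finset.mul_sum, hP1, mul_one]
      _ ≤ ∑ s, ∑ a, (|pDist P μ π t s - pDist P μ π' t s| * π s a
            + pDist P μ π' t s * |π s a - π' s a|) := by
          refine Finset.sum_le_sum fun s _ => Finset.sum_le_sum fun a _ => ?_
          have : pDist P μ π t s * π s a - pDist P μ π' t s * π' s a
              = (pDist P μ π t s - pDist P μ π' t s) * π s a
                + pDist P μ π' t s * (π s a - π' s a) := by ring
          rw [this]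
          refine (abs_add_le _ _).trans ?_
          rw [abs_mul, abs_mul, abs_of_nonneg (hπ0 s a),
            abs_of_nonneg (pDist_nonneg P μ π' hP0 hμ0 hπ'0 t s)]
      _ = ∑ s, (|pDist P μ π t s - pDist P μ π' t s|
            + pDist P μ π' t s * ∑ a, |π s a - π' s a|) := by
          refine Finset.sum_congr rfl fun s _ => ?_
          rw [Finset.sum_add_distrib, ← Finset.mul_sum, ← Finset.mul_sum, hπ1, mul_one]
      _ ≤ ∑ s, (|pDist P μ π t s - pDist P μ π' t s| + pDist P μ π' t s * (2 * c)) := by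
          refine Finset.sum_le_sum fun s _ => ?_
          have := mul_le_mul_of_nonneg_left (hTV s)
            (pDist_nonneg P μ π' hP0 hμ0 hπ'0 t s)
          linarith
      _ = (∑ s, |pDist P μ π t s - pDist P μ π' t s|)
            + (∑ s, pDist P μ π' t s) * (2 * c) := by
          rw [Finset.sum_add_distrib, Finset.sum_mul]
      _ ≤ 2 * t * c + 1 * (2 * c) := by
          rw [pDist_sum_one P μ π' hP1 hμ1 hπ'1 t]
          linarith
      _ = 2 * (↑(t + 1) : ℝ) * c := by push_cast; ring

lemma dvisit_l1 {γ : ℝ} (hγ0 : 0 < γ) (hγ1 : γ < 1) (π π' : S → A → ℝ)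
    (hP0 : ∀ s a s', 0 ≤ P s a s') (hP1 : ∀ s a, ∑ s', P s a s' = 1)
    (hμ0 : ∀ s, 0 ≤ μ s) (hμ1 : ∑ s, μ s = 1)
    (hπ0 : ∀ s a, 0 ≤ π s a) (hπ1 : ∀ s, ∑ a, π s a = 1)
    (hπ'0 : ∀ s a, 0 ≤ π' s a) (hπ'1 : ∀ s, ∑ a, π' s a = 1)
    (c : ℝ) (hc : 0 ≤ c) (hTV : ∀ s, ∑ a, |π s a - π' s a| ≤ 2 * c) :
    ∑ s, |dvisit P μ γ π s - dvisit P μ γ π' s| ≤ 2 * c * γ / (1 - γ) := by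
  have h1γ : (0:ℝ) < 1 - γ := by linarith
  have hsπ : ∀ s, Summable (fun t : ℕ => γ ^ t * pDist P μ π t s) :=
    fun s => summable_pd P μ π hγ0 hγ1 hP0 hP1 hμ0 hμ1 hπ0 hπ1 s
  have hsπ' : ∀ s, Summable (fun t : ℕ => γ ^ t * pDist P μ π' t s) :=
    fun s => summable_pd P μ π' hγ0 hγ1 hP0 hP1 hμ0 hμ1 hπ'0 hπ'1 s
  have habs : ∀ s, Summable (fun t : ℕ => γ ^ t * |pDist P μ π t s - pDist P μ π' t s|) := by
    intro s
    apply Summable.of_nonneg_of_le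
      (fun t => mul_nonneg (pow_nonneg hγ0.le t) (abs_nonneg _))
      (fun t => ?_) ((summable_geometric_of_lt_one hγ0.le hγ1).mul_left 2)
    have h1 := pDist_le_one P μ π hP0 hP1 hμ0 hμ1 hπ0 hπ1 t s
    have h2 := pDist_le_one P μ π' hP0 hP1 hμ0 hμ1 hπ'0 hπ'1 t s
    have h3 := pDist_nonneg P μ π hP0 hμ0 hπ0 t s
    have h4 := pDist_nonneg P μ π' hP0 hμ0 hπ'0 t s
    have : |pDist P μ π t s - pDist P μ π' t s| ≤ 2 := by
      rw [abs_le]; constructor <;> linarith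
    calc γ ^ t * |pDist P μ π t s - pDist P μ π' t s| ≤ γ ^ t * 2 :=
          mul_le_mul_of_nonneg_left this (pow_nonneg hγ0.le t)
      _ = 2 * γ ^ t := by ring
  have hmul : Summable (fun t : ℕ => γ ^ t * (2 * t * c)) := by
    have := (summable_pow_mul_geometric_of_norm_lt_one 1 (by
      rw [Real.norm_eq_abs, abs_of_pos hγ0]; exact hγ1) : Summable (fun n : ℕ => (n:ℝ) ^ 1 * γ ^ n))
    apply Summable.of_nonneg_of_le (fun t => ?_) (fun t => ?_) (this.mul_left (2 * c))
    · exact mul_nonneg (pow_nonneg hγ0.le t) (by positivity)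
    · apply le_of_eq; push_cast; ring
  have key1 : ∀ s, |dvisit P μ γ π s - dvisit P μ γ π' s|
      ≤ (1 - γ) * ∑' t : ℕ, γ ^ t * |pDist P μ π t s - pDist P μ π' t s| := by
    intro s
    have e : dvisit P μ γ π s - dvisit P μ γ π' s
        = (1 - γ) * ∑' t : ℕ, (γ ^ t * pDist P μ π t s - γ ^ t * pDist P μ π' t s) := by
      unfold dvisit
      rw [Summable.tsum_sub (hsπ s) (hsπ' s), mul_sub]
    rw [e, abs_mul, abs_of_pos h1γ]
    apply mul_le_mul_of_nonneg_left _ h1γ.le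
    refine le_trans ?_ (le_of_eq rfl)
    have hsummn : Summable (fun t : ℕ => ‖γ ^ t * pDist P μ π t s
        - γ ^ t * pDist P μ π' t s‖) := by
      apply Summable.congr (habs s)
      intro t
      rw [Real.norm_eq_abs, show γ ^ t * pDist P μ π t s - γ ^ t * pDist P μ π' t s
        = γ ^ t * (pDist P μ π t s - pDist P μ π' t s) by ring,
        abs_mul, abs_of_nonneg (pow_nonneg hγ0.le t)]
    have hn := norm_tsum_le_tsum_norm hsummn
    rw [Real.norm_eq_abs] at hn
    refine hn.trans (le_of_eq (tsum_congr fun t => ?_))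
    rw [Real.norm_eq_abs, show γ ^ t * pDist P μ π t s - γ ^ t * pDist P μ π' t s
      = γ ^ t * (pDist P μ π t s - pDist P μ π' t s) by ring,
      abs_mul, abs_of_nonneg (pow_nonneg hγ0.le t)]
  calc ∑ s, |dvisit P μ γ π s - dvisit P μ γ π' s|
      ≤ ∑ s, (1 - γ) * ∑' t : ℕ, γ ^ t * |pDist P μ π t s - pDist P μ π' t s| :=
        Finset.sum_le_sum fun s _ => key1 s
    _ = (1 - γ) * ∑' t : ℕ, ∑ s, γ ^ t * |pDist P μ π t s - pDist P μ π' t s| := by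
        rw [← Finset.mul_sum, ← Summable.tsum_finsetSum (fun s _ => habs s)]
    _ ≤ (1 - γ) * ∑' t : ℕ, γ ^ t * (2 * t * c) := by
        apply mul_le_mul_of_nonneg_left _ h1γ.le
        apply Summable.tsum_le_tsum _ (summable_sum (fun s _ => habs s)) hmul
        intro t
        rw [← Finset.mul_sum]
        exact mul_le_mul_of_nonneg_left
          (pDist_l1 P μ π π' hP0 hP1 hμ0 hμ1 hπ0 hπ1 hπ'0 hπ'1 c hc hTV t)
          (pow_nonneg hγ0.le t)
    _ = (1 - γ) * (2 * c * (γ / (1 - γ) ^ 2)) := by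
        congr 1
        have e : ∀ t : ℕ, γ ^ t * (2 * t * c) = (2 * c) * ((t : ℝ) * γ ^ t) := by
          intro t; ring
        rw [tsum_congr e, tsum_mul_left]
        congr 1
        exact tsum_coe_mul_geometric_of_norm_lt_one (by
          rw [Real.norm_eq_abs, abs_of_pos hγ0]; exact hγ1)
    _ = 2 * c * γ / (1 - γ) := by
        field_simp
end MDP


/-- **Surrogate upper bound for the policy guidance objective.** For every
everywhere-positive policy `π` with `D^max_KL(π, π') ≤ δ_k`,
`D^π_KL(π, π_b) ≤ α_k + ∑_s d^{π'}(s) ∑_a π(s,a) A^{π'}_{C_{π'}}(s,a)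
  + (γ/(1−γ)) ε √(2 δ_k) + δ_k`,
where `α_k = D^{π'}_KL(π', π_b)` and `ε = max_{s,a} |A^{π'}_{C_{π'}}(s,a)|`. -/
theorem stmt_12 {S A : Type*} [Fintype S] [Fintype A] [Nonempty S] [Nonempty A]
    (P : S → A → S → ℝ)
    (hP0 : ∀ s a s', 0 ≤ P s a s') (hP1 : ∀ s a, ∑ s', P s a s' = 1)
    (γ : ℝ) (hγ0 : 0 < γ) (hγ1 : γ < 1)
    (μ : S → ℝ) (hμ0 : ∀ s, 0 ≤ μ s) (hμ1 : ∑ s, μ s = 1)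
    (πb : S → A → ℝ) (hπb0 : ∀ s a, 0 < πb s a) (hπb1 : ∀ s, ∑ a, πb s a = 1)
    (π' : S → A → ℝ) (hπ'0 : ∀ s a, 0 < π' s a) (hπ'1 : ∀ s, ∑ a, π' s a = 1)
    (V' : S → ℝ)
    (hV' : ∀ s, V' s = ∑ a, π' s a *
      (Real.log (π' s a / πb s a) + γ * ∑ s', P s a s' * V' s'))
    (δk : ℝ) (hδk : 0 < δk)
    (π : S → A → ℝ) (hπ0 : ∀ s a, 0 < π s a) (hπ1 : ∀ s, ∑ a, π s a = 1)
    (hπKL : (⨆ s, KL (π s) (π' s)) ≤ δk) :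
    ∑ s, dvisit P μ γ π s * KL (π s) (πb s) ≤
      (∑ s, dvisit P μ γ π' s * KL (π' s) (πb s)) +
        (∑ s, dvisit P μ γ π' s *
          ∑ a, π s a * Adv P γ (fun s a => Real.log (π' s a / πb s a)) V' s a) +
        (γ / (1 - γ)) *
          (⨆ s, ⨆ a, |Adv P γ (fun s a => Real.log (π' s a / πb s a)) V' s a|) *
          Real.sqrt (2 * δk) +
        δk := by
  classical
  simp only [Adv]
  have hπ0' : ∀ s a, 0 ≤ π s a := fun s a => (hπ0 s a).le
  have hπ'0' : ∀ s a, 0 ≤ π' s a := fun s a => (hπ'0 s a).le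
  have h1γ : (0:ℝ) < 1 - γ := by linarith
  set E : ℝ := ⨆ s, ⨆ a, |Real.log (π' s a / πb s a) + γ * ∑ s', P s a s' * V' s' - V' s|
    with hEdef
  have hE : ∀ s a, |Real.log (π' s a / πb s a) + γ * ∑ s', P s a s' * V' s' - V' s| ≤ E := by
    intro s a
    have h2 := le_ciSup (f := fun a =>
        |Real.log (π' s a / πb s a) + γ * ∑ s', P s a s' * V' s' - V' s|)
      (Set.Finite.bddAbove (Set.finite_range _)) a
    refine h2.trans ?_
    exact le_ciSup (f := fun s => ⨆ a,
        |Real.log (π' s a / πb s a) + γ * ∑ s', P s a s' * V' s' - V' s|)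
      (Set.Finite.bddAbove (Set.finite_range _)) s
  have hE0 : 0 ≤ E :=
    (abs_nonneg _).trans (hE (Classical.arbitrary S) (Classical.arbitrary A))
  have hKLb : ∀ s, KL (π s) (π' s) ≤ δk := fun s =>
    (le_ciSup (Set.Finite.bddAbove (Set.finite_range (fun s => KL (π s) (π' s)))) s).trans hπKL
  -- per-state KL decomposition
  have stepA : ∀ s, KL (π s) (πb s)
      = KL (π s) (π' s) + ∑ a, π s a * Real.log (π' s a / πb s a) := by
    intro s
    unfold KL
    rw [← Finset.sum_add_distrib]
    refine Finset.sum_congr rfl fun a _ => ?_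
    rw [← mul_add]
    congr 1
    have he : π s a / πb s a = (π s a / π' s a) * (π' s a / πb s a) := by
      field_simp
      rw [div_eq_div_iff (by have := hπb0 s a; positivity)
        (by have := hπb0 s a; have := hπ'0 s a; positivity)]
      ring
    rw [he, Real.log_mul (div_ne_zero (hπ0 s a).ne' (hπ'0 s a).ne')
      (div_ne_zero (hπ'0 s a).ne' (hπb0 s a).ne')]
  -- return identities
  have hretπ : ∑ s, dvisit P μ γ π s * ∑ a, π s a * Real.log (π' s a / πb s a)
      = ∑ s, dvisit P μ γ π s *
          ∑ a, π s a * ((Real.log (π' s a / πb s a) + γ * ∑ s', P s a s' * V' s') - V' s)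
        + (1 - γ) * ∑ s, μ s * V' s :=
    ret_identity P μ π hγ0 hγ1 hP0 hP1 hμ0 hμ1 hπ0' hπ1
      (fun s a => Real.log (π' s a / πb s a)) V'
  have hretπ' : ∑ s, dvisit P μ γ π' s * ∑ a, π' s a * Real.log (π' s a / πb s a)
      = ∑ s, dvisit P μ γ π' s *
          ∑ a, π' s a * ((Real.log (π' s a / πb s a) + γ * ∑ s', P s a s' * V' s') - V' s)
        + (1 - γ) * ∑ s, μ s * V' s :=
    ret_identity P μ π' hγ0 hγ1 hP0 hP1 hμ0 hμ1 hπ'0' hπ'1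
      (fun s a => Real.log (π' s a / πb s a)) V'
  have hzero : ∀ s, ∑ a, π' s a *
      ((Real.log (π' s a / πb s a) + γ * ∑ s', P s a s' * V' s') - V' s) = 0 := by
    intro s
    have h1 : ∀ a ∈ Finset.univ (α := A), π' s a *
        ((Real.log (π' s a / πb s a) + γ * ∑ s', P s a s' * V' s') - V' s)
        = π' s a * (Real.log (π' s a / πb s a) + γ * ∑ s', P s a s' * V' s')
          - π' s a * V' s := fun a _ => by ring
    rw [Finset.sum_congr rfl h1, Finset.sum_sub_distrib, ← Finset.sum_mul, hπ'1, one_mul]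
    linarith [hV' s]
  have hαk : ∑ s, dvisit P μ γ π' s * KL (π' s) (πb s) = (1 - γ) * ∑ s, μ s * V' s := by
    have hKLC : ∀ s, KL (π' s) (πb s)
        = ∑ a, π' s a * Real.log (π' s a / πb s a) := fun s => rfl
    calc ∑ s, dvisit P μ γ π' s * KL (π' s) (πb s)
        = ∑ s, dvisit P μ γ π' s * ∑ a, π' s a * Real.log (π' s a / πb s a) :=
          Finset.sum_congr rfl fun s _ => by rw [hKLC s]
      _ = ∑ s, dvisit P μ γ π' s *
            ∑ a, π' s a * ((Real.log (π' s a / πb s a) + γ * ∑ s', P s a s' * V' s') - V' s)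
          + (1 - γ) * ∑ s, μ s * V' s := hretπ'
      _ = (1 - γ) * ∑ s, μ s * V' s := by
          have hz : ∑ s, dvisit P μ γ π' s *
              ∑ a, π' s a * ((Real.log (π' s a / πb s a)
                + γ * ∑ s', P s a s' * V' s') - V' s) = 0 :=
            Finset.sum_eq_zero fun s _ => by rw [hzero s, mul_zero]
          rw [hz, zero_add]
  have hLHS : ∑ s, dvisit P μ γ π s * KL (π s) (πb s)
      = ∑ s, dvisit P μ γ π s * KL (π s) (π' s)
        + ∑ s, dvisit P μ γ π s * ∑ a, π s a * Real.log (π' s a / πb s a) := by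
    rw [← Finset.sum_add_distrib]
    refine Finset.sum_congr rfl fun s _ => ?_
    rw [stepA s]
    ring
  -- bound 1: KL(π, π') term
  have b1 : ∑ s, dvisit P μ γ π s * KL (π s) (π' s) ≤ δk := by
    calc ∑ s, dvisit P μ γ π s * KL (π s) (π' s)
        ≤ ∑ s, dvisit P μ γ π s * δk := Finset.sum_le_sum fun s _ =>
          mul_le_mul_of_nonneg_left (hKLb s) (dvisit_nonneg P μ π hγ1 hP0 hμ0 hπ0' hγ0 s)
      _ = δk := by
          rw [← Finset.sum_mul, sum_dvisit_one P μ π hγ0 hγ1 hP0 hP1 hμ0 hμ1 hπ0' hπ1, one_mul]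
  -- bound 2: visitation shift
  set c : ℝ := Real.sqrt (δk / 2) with hcdef
  have hc0 : 0 ≤ c := Real.sqrt_nonneg _
  have hTVb : ∀ s, ∑ a, |π s a - π' s a| ≤ 2 * c := by
    intro s
    have hp := pinsker_fin (π s) (π' s) (hπ0 s) (hπ'0 s) (hπ1 s) (hπ'1 s)
    have h2 : Real.sqrt (KL (π s) (π' s) / 2) ≤ c := by
      rw [hcdef]
      exact Real.sqrt_le_sqrt (by linarith [hKLb s])
    have h3 : TV (π s) (π' s) = (1/2) * ∑ a, |π s a - π' s a| := rfl
    rw [h3] at hp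
    linarith [hp.trans h2]
  have hl1 : ∑ s, |dvisit P μ γ π s - dvisit P μ γ π' s| ≤ 2 * c * γ / (1 - γ) :=
    dvisit_l1 P μ hγ0 hγ1 π π' hP0 hP1 hμ0 hμ1 hπ0' hπ1 hπ'0' hπ'1 c hc0 hTVb
  have hfb : ∀ s, |∑ a, π s a *
      ((Real.log (π' s a / πb s a) + γ * ∑ s', P s a s' * V' s') - V' s)| ≤ E := by
    intro s
    refine (Finset.abs_sum_le_sum_abs _ _).trans ?_
    calc ∑ a, |π s a * ((Real.log (π' s a / πb s a) + γ * ∑ s', P s a s' * V' s') - V' s)|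
        = ∑ a, π s a * |(Real.log (π' s a / πb s a) + γ * ∑ s', P s a s' * V' s') - V' s| := by
          refine Finset.sum_congr rfl fun a _ => ?_
          rw [abs_mul, abs_of_nonneg (hπ0' s a)]
      _ ≤ ∑ a, π s a * E := Finset.sum_le_sum fun a _ =>
          mul_le_mul_of_nonneg_left (hE s a) (hπ0' s a)
      _ = E := by rw [← Finset.sum_mul, hπ1, one_mul]
  have hdiff : ∑ s, dvisit P μ γ π s *
        ∑ a, π s a * ((Real.log (π' s a / πb s a) + γ * ∑ s', P s a s' * V' s') - V' s)
      - ∑ s, dvisit P μ γ π' s *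
        ∑ a, π s a * ((Real.log (π' s a / πb s a) + γ * ∑ s', P s a s' * V' s') - V' s)
      ≤ E * (2 * c * γ / (1 - γ)) := by
    rw [← Finset.sum_sub_distrib]
    calc ∑ s, (dvisit P μ γ π s *
          ∑ a, π s a * ((Real.log (π' s a / πb s a) + γ * ∑ s', P s a s' * V' s') - V' s)
        - dvisit P μ γ π' s *
          ∑ a, π s a * ((Real.log (π' s a / πb s a) + γ * ∑ s', P s a s' * V' s') - V' s))
        = ∑ s, (dvisit P μ γ π s - dvisit P μ γ π' s) *
          ∑ a, π s a * ((Real.log (π' s a / πb s a) + γ * ∑ s', P s a s' * V' s') - V' s) := by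
          refine Finset.sum_congr rfl fun s _ => ?_
          ring
      _ ≤ ∑ s, |dvisit P μ γ π s - dvisit P μ γ π' s| * E := by
          refine Finset.sum_le_sum fun s _ => ?_
          refine (le_abs_self _).trans ?_
          rw [abs_mul]
          exact mul_le_mul_of_nonneg_left (hfb s) (abs_nonneg _)
      _ = (∑ s, |dvisit P μ γ π s - dvisit P μ γ π' s|) * E := by rw [Finset.sum_mul]
      _ ≤ (2 * c * γ / (1 - γ)) * E := mul_le_mul_of_nonneg_right hl1 hE0
      _ = E * (2 * c * γ / (1 - γ)) := mul_comm _ _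
  have hsqrt : 2 * c = Real.sqrt (2 * δk) := by
    rw [hcdef, show (2:ℝ) * δk = 2 ^ 2 * (δk / 2) by ring,
      Real.sqrt_mul (by positivity) (δk / 2), Real.sqrt_sq (by norm_num : (0:ℝ) ≤ 2)]
  have heq : γ / (1 - γ) * E * Real.sqrt (2 * δk) = E * (2 * c * γ / (1 - γ)) := by
    rw [← hsqrt]
    field_simp
  linarith [hLHS, hretπ, hαk, b1, hdiff]
end

section
/- (Optimal discriminator) Let X be a finite nonempty set and let p, q be probability distributions on X with p(x) > 0 and q(x) > 0 for all x. Then for every function B : X → (0,1), ∑_x p(x) log B(x) + ∑_x q(x) log(1 − B(x)) ≤ ∑_x p(x) log B*(x) + ∑_x q(x) log(1 − B*(x)), where B*(x) = p(x)/(p(x) + q(x)). -/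
lemma pointwise_opt (p q b : ℝ) (hp : 0 < p) (hq : 0 < q) (hb0 : 0 < b) (hb1 : b < 1) :
    p * Real.log b + q * Real.log (1 - b) ≤
      p * Real.log (p / (p + q)) + q * Real.log (q / (p + q)) := by
  have hpq : 0 < p + q := by linarith
  have h1b : 0 < 1 - b := by linarith
  have key1 : Real.log b - Real.log (p / (p + q)) = Real.log (b * (p + q) / p) := by
    rw [Real.log_div (by positivity) hp.ne', Real.log_div hp.ne' hpq.ne',
      Real.log_mul hb0.ne' hpq.ne']
    ring
  have key2 : Real.log (1 - b) - Real.log (q / (p + q)) = Real.log ((1 - b) * (p + q) / q) := by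
    rw [Real.log_div (by positivity) hq.ne', Real.log_div hq.ne' hpq.ne',
      Real.log_mul h1b.ne' hpq.ne']
    ring
  have l1 : Real.log (b * (p + q) / p) ≤ b * (p + q) / p - 1 :=
    Real.log_le_sub_one_of_pos (by positivity)
  have l2 : Real.log ((1 - b) * (p + q) / q) ≤ (1 - b) * (p + q) / q - 1 :=
    Real.log_le_sub_one_of_pos (by positivity)
  have e1 : p * (b * (p + q) / p - 1) = b * (p + q) - p := by field_simp
  have e2 : q * ((1 - b) * (p + q) / q - 1) = (1 - b) * (p + q) - q := by field_simp
  nlinarith [mul_le_mul_of_nonneg_left l1 hp.le, mul_le_mul_of_nonneg_left l2 hq.le,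
    key1, key2]

/-- **Optimal discriminator.** Let `X` be a finite nonempty set and `p, q` strictly positive
probability distributions on `X`. Then for every `B : X → (0,1)`,
`∑_x p(x) log B(x) + ∑_x q(x) log(1 − B(x))
  ≤ ∑_x p(x) log B*(x) + ∑_x q(x) log(1 − B*(x))`,
where `B*(x) = p(x)/(p(x) + q(x))`. -/
theorem stmt_14 {X : Type*} [Fintype X] [Nonempty X]
    (p q : X → ℝ) (hp0 : ∀ x, 0 < p x) (hp1 : ∑ x, p x = 1)
    (hq0 : ∀ x, 0 < q x) (hq1 : ∑ x, q x = 1)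
    (B : X → ℝ) (hB : ∀ x, B x ∈ Set.Ioo (0 : ℝ) 1) :
    ∑ x, p x * Real.log (B x) + ∑ x, q x * Real.log (1 - B x) ≤
      ∑ x, p x * Real.log (p x / (p x + q x)) +
        ∑ x, q x * Real.log (1 - p x / (p x + q x)) := by
  have hrw : ∀ x, 1 - p x / (p x + q x) = q x / (p x + q x) := by
    intro x
    have : p x + q x > 0 := by linarith [hp0 x, hq0 x]
    field_simp
    ring
  simp_rw [hrw, ← Finset.sum_add_distrib]
  exact Finset.sum_le_sum fun x _ =>
    pointwise_opt (p x) (q x) (B x) (hp0 x) (hq0 x) (hB x).1 (hB x).2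
end
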